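/- Let K ⊂ ℂ^d be compact and invariant under the torus action z ↦ (e^{it₁}z₁,…,e^{it_d}z_d). Fix a multi-index α ∈ (ℤ≥0)^d and let Q(α) be the set of polynomials of the form z^α + Σ_{β <ₗ α} c_β z^β, where <ₗ is the graded lexicographic order. Then inf_{q ∈ Q(α)} ‖q‖_K = ‖z^α‖_K; i.e., the monomial z^α is a Chebyshev polynomial of index α for K. -/

import Mathlib

open Finset MvPolynomial

/-- Total degree of a multi-index. -/
def mdeg {d : ℕ} (β : Fin d →₀ ℕ) : ℕ := β.sum fun _ n => n

/-- Graded lexicographic order on multi-indices: `β <ₗ α` iff `|β| < |α|`, or the total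
degrees agree and at the first differing coordinate `α` exceeds `β`. -/
def gradedLexLT {d : ℕ} (β α : Fin d →₀ ℕ) : Prop :=
  mdeg β < mdeg α ∨ (mdeg β = mdeg α ∧ ∃ i : Fin d, (∀ j, j < i → β j = α j) ∧ β i < α i)

/-- Sup norm of a polynomial on a set `K ⊆ ℂ^d`. -/
noncomputable def supNorm {d : ℕ} (K : Set (Fin d → ℂ)) (q : MvPolynomial (Fin d) ℂ) : ℝ :=
  sSup ((fun w => ‖MvPolynomial.eval w q‖) '' K)

lemma coord_le_mdeg {d : ℕ} (β : Fin d →₀ ℕ) (i : Fin d) : β i ≤ mdeg β := by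
  unfold mdeg
  rw [Finsupp.sum]
  by_cases h : β i = 0
  · simp [h]
  · exact Finset.single_le_sum (f := fun j => β j) (fun _ _ => Nat.zero_le _)
      (Finsupp.mem_support_iff.mpr h)

lemma sum_exp_eq (N : ℕ) (hN : 0 < N) (m : ℤ) (hm : m.natAbs < N) :
    ∑ x : Fin N, Complex.exp (2 * Real.pi * Complex.I * m * x / N)
      = if m = 0 then (N : ℂ) else 0 := by
  have hNne : (N : ℂ) ≠ 0 := Nat.cast_ne_zero.mpr hN.ne'
  by_cases h : m = 0
  · simp [h]
  · simp only [if_neg h]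
    set ζ : ℂ := Complex.exp (2 * Real.pi * Complex.I * m / N) with hζdef
    have hterm : ∀ x : Fin N,
        Complex.exp (2 * Real.pi * Complex.I * m * x / N) = ζ ^ (x : ℕ) := by
      intro x
      rw [hζdef, ← Complex.exp_nat_mul]
      congr 1
      ring
    rw [Finset.sum_congr rfl fun x _ => hterm x,
      Fin.sum_univ_eq_sum_range (fun n => ζ ^ n) N]
    have h2πI : (2 * (Real.pi : ℂ) * Complex.I) ≠ 0 := by
      simp [Real.pi_ne_zero, Complex.I_ne_zero]
    have hζ1 : ζ ≠ 1 := by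
      intro hc
      rw [hζdef, Complex.exp_eq_one_iff] at hc
      obtain ⟨n, hn⟩ := hc
      rw [div_eq_iff hNne] at hn
      have hmc : (m : ℂ) = n * N := by
        apply mul_left_cancel₀ h2πI
        linear_combination hn
      have hmz : m = n * N := by exact_mod_cast hmc
      have hn0 : n ≠ 0 := by
        rintro rfl; simp at hmz; exact h hmz
      have : N ≤ m.natAbs := by
        rw [hmz, Int.natAbs_mul, Int.natAbs_natCast]
        exact Nat.le_mul_of_pos_left N (Int.natAbs_pos.mpr hn0)
      omega
    have hζN : ζ ^ N = 1 := by
      rw [hζdef, ← Complex.exp_nat_mul]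
      have : (N : ℂ) * (2 * Real.pi * Complex.I * m / N) = m * (2 * Real.pi * Complex.I) := by
        field_simp
      rw [this, Complex.exp_int_mul_two_pi_mul_I]
    rw [geom_sum_eq hζ1, hζN]
    simp

theorem stmt13 (d : ℕ) (K : Set (Fin d → ℂ)) (hK : IsCompact K)
    (hinv : ∀ t : Fin d → ℝ, ∀ z ∈ K,
      (fun i => Complex.exp (Complex.I * (t i : ℂ)) * z i) ∈ K)
    (α : Fin d →₀ ℕ)
    (Q : Set (MvPolynomial (Fin d) ℂ))
    (hQ : Q = {q | q.coeff α = 1 ∧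
      ∀ β : Fin d →₀ ℕ, q.coeff β ≠ 0 → β = α ∨ gradedLexLT β α}) :
    IsLeast ((supNorm K) '' Q) (supNorm K (MvPolynomial.monomial α (1:ℂ))) := by
  subst hQ
  constructor
  · -- the monomial itself belongs to Q
    refine ⟨monomial α 1, ⟨?_, ?_⟩, rfl⟩
    · simp [coeff_monomial]
    · intro β hβ
      left
      by_contra hne
      rw [coeff_monomial, if_neg (fun h => hne h.symm)] at hβ
      exact hβ rfl
  · rintro x ⟨q, ⟨hq1, hq2⟩, rfl⟩
    -- bound on supports
    set N : ℕ := mdeg α + 1 with hNdef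
    have hNpos : 0 < N := Nat.succ_pos _
    have hNne : (N : ℂ) ≠ 0 := Nat.cast_ne_zero.mpr hNpos.ne'
    have hαlt : ∀ i, α i < N := fun i => Nat.lt_succ_of_le (coord_le_mdeg α i)
    have hβlt : ∀ β ∈ q.support, ∀ i, β i < N := by
      intro β hβ i
      rcases hq2 β (Finsupp.mem_support_iff.mp hβ) with rfl | hlt
      · exact hαlt i
      · have : mdeg β ≤ mdeg α := by
          rcases hlt with h | ⟨h, _⟩
          · exact h.le
          · exact h.le
        exact Nat.lt_succ_of_le ((coord_le_mdeg β i).trans this)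
    -- basic facts about supNorm
    have hcont : Continuous fun w : Fin d → ℂ => ‖eval w q‖ :=
      continuous_norm.comp (MvPolynomial.continuous_eval q)
    have hbdd : BddAbove ((fun w => ‖eval w q‖) '' K) :=
      (hK.image hcont).bddAbove
    have hle : ∀ w ∈ K, ‖eval w q‖ ≤ supNorm K q :=
      fun w hw => le_csSup hbdd ⟨w, hw, rfl⟩
    have hq0 : (0:ℝ) ≤ supNorm K q := by
      rcases K.eq_empty_or_nonempty with h | ⟨w, hw⟩
      · simp [supNorm, h, Real.sSup_empty]
      · exact (norm_nonneg _).trans (hle w hw)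
    -- the key pointwise bound
    have key : ∀ z ∈ K, ‖eval z (monomial α (1:ℂ))‖ ≤ supNorm K q := by
      intro z hz
      set c : ℂ := 2 * Real.pi * Complex.I with hcdef
      set w : (Fin d → Fin N) → Fin d → ℂ :=
        fun k i => Complex.exp (c * ((k i : ℕ) : ℂ) / N) * z i with hwdef
      have hwK : ∀ k, w k ∈ K := by
        intro k
        have h := hinv (fun i => 2 * Real.pi * ((k i : ℕ) : ℝ) / N) z hz
        have he : (fun i => Complex.exp (Complex.I *
            (((2 * Real.pi * ((k i : ℕ) : ℝ) / N : ℝ)) : ℂ)) * z i) = w k := by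
          funext i
          rw [hwdef]
          congr 1
          congr 1
          push_cast
          ring
        rwa [he] at h
      -- the averaging identity
      have hident :
          ∑ k : Fin d → Fin N, eval (w k) q *
              Complex.exp (-(c * ∑ i, (α i : ℂ) * ((k i : ℕ) : ℂ)) / N)
            = (N : ℂ) ^ d * ∏ i, z i ^ α i := by
        have hstep : ∀ k : Fin d → Fin N,
            eval (w k) q * Complex.exp (-(c * ∑ i, (α i : ℂ) * ((k i : ℕ) : ℂ)) / N)
              = ∑ β ∈ q.support, coeff β q * (∏ i, z i ^ β i) *
                  ∏ i, Complex.exp (c * (((β i : ℕ) : ℂ) - ((α i : ℕ) : ℂ)) *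
                    ((k i : ℕ) : ℂ) / N) := by
          intro k
          rw [eval_eq', Finset.sum_mul]
          refine Finset.sum_congr rfl fun β _ => ?_
          have hfac : ∀ i, (w k i) ^ (β i)
              = Complex.exp ((β i : ℂ) * (c * ((k i : ℕ) : ℂ) / N)) * z i ^ β i := by
            intro i
            rw [hwdef]
            rw [mul_pow, ← Complex.exp_nat_mul]
          rw [Finset.prod_congr rfl fun i _ => hfac i, Finset.prod_mul_distrib]
          have hexp : (∏ i : Fin d, Complex.exp ((β i : ℂ) * (c * ((k i : ℕ) : ℂ) / N))) *
              Complex.exp (-(c * ∑ i, (α i : ℂ) * ((k i : ℕ) : ℂ)) / N)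
              = ∏ i, Complex.exp (c * (((β i : ℕ) : ℂ) - ((α i : ℕ) : ℂ)) *
                  ((k i : ℕ) : ℂ) / N) := by
            rw [← Complex.exp_sum, ← Complex.exp_sum, ← Complex.exp_add]
            congr 1
            have h1 : ∀ i ∈ (univ : Finset (Fin d)),
                c * (((β i : ℕ) : ℂ) - ((α i : ℕ) : ℂ)) * ((k i : ℕ) : ℂ) / N
                  = (β i : ℂ) * (c * ((k i : ℕ) : ℂ) / N)
                    - c * ((α i : ℂ) * ((k i : ℕ) : ℂ)) / N := fun i _ => by ring
            rw [Finset.sum_congr rfl h1, Finset.sum_sub_distrib]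
            have h2 : (c * ∑ i, (α i : ℂ) * ((k i : ℕ) : ℂ)) / N
                = ∑ i : Fin d, c * ((α i : ℂ) * ((k i : ℕ) : ℂ)) / N := by
              rw [Finset.mul_sum, Finset.sum_div]
            rw [← h2, sub_eq_add_neg, neg_div]
          linear_combination (coeff β q * ∏ i : Fin d, z i ^ β i) * hexp
        rw [Finset.sum_congr rfl fun k _ => hstep k, Finset.sum_comm]
        have hinner : ∀ β ∈ q.support,
            ∑ k : Fin d → Fin N, coeff β q * (∏ i, z i ^ β i) *
                ∏ i, Complex.exp (c * (((β i : ℕ) : ℂ) - ((α i : ℕ) : ℂ)) *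
                  ((k i : ℕ) : ℂ) / N)
              = coeff β q * (∏ i, z i ^ β i) *
                  ∏ i : Fin d, (if β i = α i then (N : ℂ) else 0) := by
          intro β hβ
          rw [← Finset.mul_sum,
            ← Fintype.prod_sum fun (i : Fin d) (x : Fin N) =>
              Complex.exp (c * (((β i : ℕ) : ℂ) - ((α i : ℕ) : ℂ)) * ((x : ℕ) : ℂ) / N)]
          congr 1
          refine Finset.prod_congr rfl fun i _ => ?_
          have hm := sum_exp_eq N hNpos ((β i : ℤ) - (α i : ℤ))
            (by have h1 := hβlt β hβ i; have h2 := hαlt i; omega)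
          have hcast : ((((β i : ℤ) - (α i : ℤ)) : ℤ) : ℂ)
              = ((β i : ℕ) : ℂ) - ((α i : ℕ) : ℂ) := by push_cast; ring
          rw [hcdef]
          rw [← hcast, hm]
          by_cases hbi : β i = α i
          · rw [if_pos (by omega : (β i : ℤ) - (α i : ℤ) = 0), if_pos hbi]
          · rw [if_neg (by omega : ¬((β i : ℤ) - (α i : ℤ) = 0)), if_neg hbi]
        rw [Finset.sum_congr rfl hinner, Finset.sum_eq_single α]
        · rw [hq1, one_mul]
          have : ∏ i : Fin d, (if α i = α i then (N : ℂ) else 0) = (N : ℂ) ^ d := by simp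
          rw [this]
          ring
        · intro β hβ hne
          have hex : ∃ i, β i ≠ α i := by
            by_contra hc
            push_neg at hc
            exact hne (Finsupp.ext hc)
          obtain ⟨i, hi⟩ := hex
          exact mul_eq_zero_of_right _
            (Finset.prod_eq_zero (Finset.mem_univ i) (if_neg hi))
        · intro hα
          simp [MvPolynomial.notMem_support_iff.mp hα]
      -- bound each term of the sum
      have habs : ∀ k : Fin d → Fin N,
          ‖eval (w k) q *
              Complex.exp (-(c * ∑ i, (α i : ℂ) * ((k i : ℕ) : ℂ)) / N)‖
            ≤ supNorm K q := by
        intro k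
        rw [norm_mul]
        have h1 : ‖Complex.exp
            (-(c * ∑ i, (α i : ℂ) * ((k i : ℕ) : ℂ)) / N)‖ = 1 := by
          have hs : -(c * ∑ i, (α i : ℂ) * ((k i : ℕ) : ℂ)) / N
              = ((-(2 * Real.pi * ∑ i, (α i : ℝ) * ((k i : ℕ) : ℝ)) / N : ℝ) : ℂ)
                  * Complex.I := by
            rw [hcdef]
            push_cast
            ring
          rw [hs, Complex.norm_exp_ofReal_mul_I]
        rw [h1, mul_one]
        exact hle _ (hwK k)
      -- put the estimates together
      have hsum : (N : ℝ) ^ d * ‖∏ i, z i ^ α i‖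
          ≤ (N : ℝ) ^ d * supNorm K q := by
        have h1 : ‖(N : ℂ) ^ d * ∏ i, z i ^ α i‖
            = (N : ℝ) ^ d * ‖∏ i, z i ^ α i‖ := by
          rw [norm_mul, norm_pow, Complex.norm_natCast]
        rw [← h1, ← hident]
        calc ‖∑ k : Fin d → Fin N, eval (w k) q *
                Complex.exp (-(c * ∑ i, (α i : ℂ) * ((k i : ℕ) : ℂ)) / N)‖
            ≤ ∑ k : Fin d → Fin N, ‖eval (w k) q *
                Complex.exp (-(c * ∑ i, (α i : ℂ) * ((k i : ℕ) : ℂ)) / N)‖ :=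
              norm_sum_le _ _
          _ ≤ (Finset.univ : Finset (Fin d → Fin N)).card • supNorm K q :=
              Finset.sum_le_card_nsmul _ _ _ (fun k _ => habs k)
          _ = (N : ℝ) ^ d * supNorm K q := by
              rw [nsmul_eq_mul, Finset.card_univ, Fintype.card_fun,
                Fintype.card_fin, Fintype.card_fin, Nat.cast_pow]
      have hpos : (0:ℝ) < (N : ℝ) ^ d := by positivity
      have hfin : ‖∏ i, z i ^ α i‖ ≤ supNorm K q :=
        le_of_mul_le_mul_left hsum hpos
      have hev : eval z (monomial α (1:ℂ)) = ∏ i, z i ^ α i := by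
        rw [eval_monomial, one_mul, Finsupp.prod_pow]
      rw [hev]
      exact hfin
    -- conclude
    apply Real.sSup_le _ hq0
    rintro x ⟨z, hz, rfl⟩
    exact key z hz
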